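/- Let μ and ν be Borel probability measures on ℝ^d with all moments finite. If for some n ∈ ℕ the optimal value ρ_n of the level-n semidefinite relaxation equals 2, then ‖μ − ν‖_TV = 2, i.e. μ and ν are mutually singular. -/

import Mathlib

open MeasureTheory Finset Filter

noncomputable section

/-- The monomial `x ↦ x^α`. -/
def mono (d : ℕ) (α : Fin d → ℕ) (x : Fin d → ℝ) : ℝ := ∏ i, x i ^ α i

/-- All moments of `μ` are finite. -/
def HasAllMoments {d : ℕ} (μ : Measure (Fin d → ℝ)) : Prop :=
  ∀ α : Fin d → ℕ, Integrable (mono d α) μ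

/-- The moment `μ_α = ∫ x^α dμ`. -/
def mMom {d : ℕ} (μ : Measure (Fin d → ℝ)) (α : Fin d → ℕ) : ℝ := ∫ x, mono d α x ∂μ

instance fintypeIdx (d n : ℕ) : Fintype {α : Fin d → ℕ // ∑ i, α i ≤ n} :=
  Fintype.ofInjective
    (fun a => (fun i => (⟨a.1 i,
        Nat.lt_succ_of_le (le_trans
          (Finset.single_le_sum (fun j _ => Nat.zero_le (a.1 j)) (Finset.mem_univ i)) a.2)⟩ :
        Fin (n+1))) : _ → (Fin d → Fin (n+1)))
    (fun a b h => by
      apply Subtype.ext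
      funext i
      exact congrArg Fin.val (congrFun h i))

/-- Moment matrix of order `n` built from a moment function `m`. -/
def momMat (d n : ℕ) (m : (Fin d → ℕ) → ℝ) :
    Matrix {α : Fin d → ℕ // ∑ i, α i ≤ n} {α : Fin d → ℕ // ∑ i, α i ≤ n} ℝ :=
  fun a b => m (a.1 + b.1)

/-- Carleman's condition. -/
def Carleman {d : ℕ} (μ : Measure (Fin d → ℝ)) : Prop :=
  ∀ i : Fin d, ¬ Summable (fun j : ℕ =>
    (∫ x, x i ^ (2 * (j + 1)) ∂μ) ^ (-(1 : ℝ) / (2 * (j + 1) : ℝ)))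

/-- Positive part of the Hahn–Jordan decomposition of `μ - ν`. -/
def hjPos {d : ℕ} (μ ν : Measure (Fin d → ℝ)) [IsFiniteMeasure μ] [IsFiniteMeasure ν] :
    Measure (Fin d → ℝ) :=
  (μ.toSignedMeasure - ν.toSignedMeasure).toJordanDecomposition.posPart

/-- Negative part of the Hahn–Jordan decomposition of `μ - ν`. -/
def hjNeg {d : ℕ} (μ ν : Measure (Fin d → ℝ)) [IsFiniteMeasure μ] [IsFiniteMeasure ν] :
    Measure (Fin d → ℝ) :=
  (μ.toSignedMeasure - ν.toSignedMeasure).toJordanDecomposition.negPart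

/-- Total variation distance `‖μ - ν‖_TV` (as a real number). -/
def tvReal {d : ℕ} (μ ν : Measure (Fin d → ℝ)) [IsFiniteMeasure μ] [IsFiniteMeasure ν] : ℝ :=
  (hjPos μ ν Set.univ + hjNeg μ ν Set.univ).toReal

/-- Degree-`2n` pseudo-moment vectors. -/
abbrev PV (d n : ℕ) := {α : Fin d → ℕ // ∑ i, α i ≤ 2 * n} → ℝ

/-- Moment matrix of a degree-`2n` pseudo-moment vector. -/
def pvMat (d n : ℕ) (φ : PV d n) :
    Matrix {α : Fin d → ℕ // ∑ i, α i ≤ n} {α : Fin d → ℕ // ∑ i, α i ≤ n} ℝ :=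
  fun a b => φ ⟨a.1 + b.1, by
    have h : ∑ i, (a.1 + b.1) i = (∑ i, a.1 i) + ∑ i, b.1 i := by
      simp [Finset.sum_add_distrib]
    have ha := a.2
    have hb := b.2
    omega⟩

/-- The index `α = 0`. -/
def zeroIdx (d n : ℕ) : {α : Fin d → ℕ // ∑ i, α i ≤ 2 * n} := ⟨0, by simp⟩

/-- Feasibility for the level-`n` semidefinite relaxation. -/
def Feas (d n : ℕ) (μ ν : Measure (Fin d → ℝ)) (φ ψ : PV d n) : Prop :=
  (∀ α, φ α - ψ α = mMom μ α.1 - mMom ν α.1) ∧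
  (pvMat d n φ).PosSemidef ∧ (momMat d n (mMom μ) - pvMat d n φ).PosSemidef ∧
  (pvMat d n ψ).PosSemidef ∧ (momMat d n (mMom ν) - pvMat d n ψ).PosSemidef

/-- Values of the level-`n` semidefinite relaxation. -/
def primalSet (d n : ℕ) (μ ν : Measure (Fin d → ℝ)) : Set ℝ :=
  {r | ∃ φ ψ : PV d n, Feas d n μ ν φ ψ ∧ r = φ (zeroIdx d n) + ψ (zeroIdx d n)}

/-- The optimal value `ρ_n` of the level-`n` semidefinite relaxation. -/
def rho (d n : ℕ) (μ ν : Measure (Fin d → ℝ)) : ℝ := sInf (primalSet d n μ ν)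



/-! ### Auxiliary lemmas -/

lemma mono_zero' {d : ℕ} (x : Fin d → ℝ) : mono d 0 x = 1 := by simp [mono]

lemma mono_add' {d : ℕ} (α β : Fin d → ℕ) (x : Fin d → ℝ) :
    mono d (α + β) x = mono d α x * mono d β x := by
  simp [mono, pow_add, Finset.prod_mul_distrib]

lemma mMom_zero' {d : ℕ} (κ : Measure (Fin d → ℝ)) [IsFiniteMeasure κ] :
    mMom κ 0 = (κ Set.univ).toReal := by
  simp only [mMom]
  simp [mono_zero']
  rfl

lemma hasAllMoments_mono' {d : ℕ} {κ μ : Measure (Fin d → ℝ)} (h : κ ≤ μ)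
    (hμ : HasAllMoments μ) : HasAllMoments κ := fun α => (hμ α).mono_measure h

lemma momMat_posSemidef {d : ℕ} (n : ℕ) (κ : Measure (Fin d → ℝ)) [IsFiniteMeasure κ]
    (hκ : HasAllMoments κ) : (momMat d n (mMom κ)).PosSemidef := by
  classical
  refine Matrix.PosSemidef.of_dotProduct_mulVec_nonneg ?_ ?_
  · ext a b
    simp [momMat, Matrix.conjTranspose_apply, add_comm]
  · intro x
    have hInt : ∀ a b : {α : Fin d → ℕ // ∑ i, α i ≤ n},
        Integrable (fun y => (x a * mono d a.1 y) * (x b * mono d b.1 y)) κ := by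
      intro a b
      have heq : (fun y => (x a * mono d a.1 y) * (x b * mono d b.1 y))
          = fun y => (x a * x b) * mono d (a.1 + b.1) y := by
        funext y; rw [mono_add']; ring
      rw [heq]
      exact (hκ _).const_mul _
    have hval : ∀ a b : {α : Fin d → ℕ // ∑ i, α i ≤ n},
        ∫ y, (x a * mono d a.1 y) * (x b * mono d b.1 y) ∂κ
          = x a * (mMom κ (a.1 + b.1) * x b) := by
      intro a b
      have heq : (fun y => (x a * mono d a.1 y) * (x b * mono d b.1 y))
          = fun y => (x a * x b) * mono d (a.1 + b.1) y := by
        funext y; rw [mono_add']; ring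
      rw [heq, MeasureTheory.integral_const_mul]
      simp only [mMom]; ring
    have key : dotProduct (star x) ((momMat d n (mMom κ)).mulVec x)
        = ∫ y, (∑ a : {α : Fin d → ℕ // ∑ i, α i ≤ n}, x a * mono d a.1 y)^2 ∂κ := by
      have expand : (fun y => (∑ a : {α : Fin d → ℕ // ∑ i, α i ≤ n}, x a * mono d a.1 y)^2)
          = fun y => ∑ a : {α : Fin d → ℕ // ∑ i, α i ≤ n},
              ∑ b : {α : Fin d → ℕ // ∑ i, α i ≤ n},
              (x a * mono d a.1 y) * (x b * mono d b.1 y) := by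
        funext y
        rw [sq, Finset.sum_mul_sum]
      rw [expand]
      rw [integral_finset_sum _ (fun a _ => integrable_finset_sum _ (fun b _ => hInt a b))]
      have : ∀ a : {α : Fin d → ℕ // ∑ i, α i ≤ n},
          ∫ y, ∑ b : {α : Fin d → ℕ // ∑ i, α i ≤ n},
            (x a * mono d a.1 y) * (x b * mono d b.1 y) ∂κ
          = ∑ b : {α : Fin d → ℕ // ∑ i, α i ≤ n}, x a * (mMom κ (a.1 + b.1) * x b) := by
        intro a
        rw [integral_finset_sum _ (fun b _ => hInt a b)]
        exact Finset.sum_congr rfl (fun b _ => hval a b)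
      simp_rw [this]
      simp [dotProduct, Matrix.mulVec, momMat, Finset.mul_sum]
    rw [key]
    exact integral_nonneg (fun y => sq_nonneg _)

/-- If for some `n` the optimal value `ρ_n` of the level-`n` semidefinite
relaxation equals `2`, then `‖μ - ν‖_TV = 2`, i.e. the two probability measures `μ` and `ν`
are mutually singular. -/
theorem rho_eq_two_imp_mutuallySingular (d n : ℕ) (μ ν : Measure (Fin d → ℝ))
    [IsProbabilityMeasure μ] [IsProbabilityMeasure ν]
    (hμ : HasAllMoments μ) (hν : HasAllMoments ν)
    (h : rho d n μ ν = 2) :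
    tvReal μ ν = 2 ∧ μ ⟂ₘ ν := by
  classical
  have hPfin : IsFiniteMeasure (hjPos μ ν) := by unfold hjPos; infer_instance
  have hNfin : IsFiniteMeasure (hjNeg μ ν) := by unfold hjNeg; infer_instance
  set P := hjPos μ ν with hPdef
  set N := hjNeg μ ν with hNdef
  -- the signed-measure identity
  have h1 : P.toSignedMeasure - N.toSignedMeasure = μ.toSignedMeasure - ν.toSignedMeasure :=
    (μ.toSignedMeasure - ν.toSignedMeasure).toSignedMeasure_toJordanDecomposition
  have hsm : μ.toSignedMeasure + N.toSignedMeasure = ν.toSignedMeasure + P.toSignedMeasure := by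
    rw [sub_eq_sub_iff_add_eq_add] at h1
    rw [add_comm ν.toSignedMeasure P.toSignedMeasure]
    exact h1.symm
  -- the corresponding identity for measures
  have hkey : μ + N = ν + P := by
    ext E hE
    have h2 : (μ.toSignedMeasure + N.toSignedMeasure) E
        = (ν.toSignedMeasure + P.toSignedMeasure) E := by rw [hsm]
    rw [VectorMeasure.add_apply, VectorMeasure.add_apply,
      Measure.toSignedMeasure_apply_measurable hE, Measure.toSignedMeasure_apply_measurable hE,
      Measure.toSignedMeasure_apply_measurable hE, Measure.toSignedMeasure_apply_measurable hE]
      at h2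
    rw [Measure.add_apply, Measure.add_apply]
    have hfin1 : μ E + N E ≠ ⊤ := by
      exact ENNReal.add_ne_top.mpr ⟨measure_ne_top _ _, measure_ne_top _ _⟩
    have hfin2 : ν E + P E ≠ ⊤ := by
      exact ENNReal.add_ne_top.mpr ⟨measure_ne_top _ _, measure_ne_top _ _⟩
    refine (ENNReal.toReal_eq_toReal_iff' hfin1 hfin2).mp ?_
    rw [ENNReal.toReal_add (measure_ne_top _ _) (measure_ne_top _ _),
      ENNReal.toReal_add (measure_ne_top _ _) (measure_ne_top _ _)]
    exact h2
  have hkeyE : ∀ E : Set (Fin d → ℝ), μ E + N E = ν E + P E := by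
    intro E
    have := congrArg (fun m : Measure (Fin d → ℝ) => m E) hkey
    simpa [Measure.add_apply] using this
  -- the Hahn set
  obtain ⟨S, hSm, hPS0, hNSc0⟩ :=
    (μ.toSignedMeasure - ν.toSignedMeasure).toJordanDecomposition.mutuallySingular
  have hPS : P S = 0 := hPS0
  have hNSc : N Sᶜ = 0 := hNSc0
  -- P ≤ μ
  have hPle : P ≤ μ := by
    refine Measure.le_iff.mpr (fun E hE => ?_)
    have hPE : P E = P (E ∩ Sᶜ) := by
      have hd : P (E \ Sᶜ) = 0 :=
        le_antisymm (le_trans (measure_mono (by intro y hy; simpa using hy.2)) hPS.le)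
          (zero_le)
      have := measure_inter_add_diff (μ := P) E hSm.compl
      rw [hd, add_zero] at this
      exact this.symm
    have hNEA : N (E ∩ Sᶜ) = 0 :=
      le_antisymm (le_trans (measure_mono Set.inter_subset_right) hNSc.le) (zero_le)
    have h2 := hkeyE (E ∩ Sᶜ)
    rw [hNEA, add_zero] at h2
    calc P E = P (E ∩ Sᶜ) := hPE
      _ ≤ ν (E ∩ Sᶜ) + P (E ∩ Sᶜ) := le_add_self
      _ = μ (E ∩ Sᶜ) := h2.symm
      _ ≤ μ E := measure_mono Set.inter_subset_left
  -- N ≤ ν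
  have hNle : N ≤ ν := by
    refine Measure.le_iff.mpr (fun E hE => ?_)
    have hNE : N E = N (E ∩ S) := by
      have hd : N (E \ S) = 0 :=
        le_antisymm (le_trans (measure_mono (by intro y hy; exact hy.2)) hNSc.le) (zero_le)
      have := measure_inter_add_diff (μ := N) E hSm
      rw [hd, add_zero] at this
      exact this.symm
    have hPEA : P (E ∩ S) = 0 :=
      le_antisymm (le_trans (measure_mono Set.inter_subset_right) hPS.le) (zero_le)
    have h2 := hkeyE (E ∩ S)
    rw [hPEA, add_zero] at h2
    calc N E = N (E ∩ S) := hNE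
      _ ≤ μ (E ∩ S) + N (E ∩ S) := le_add_self
      _ = ν (E ∩ S) := h2
      _ ≤ ν E := measure_mono Set.inter_subset_left
  have hP1 : P Set.univ ≤ 1 := by
    have := Measure.le_iff'.mp hPle Set.univ
    simpa using this
  have hN1 : N Set.univ ≤ 1 := by
    have := Measure.le_iff'.mp hNle Set.univ
    simpa using this
  -- all moments
  have hPall : HasAllMoments P := hasAllMoments_mono' hPle hμ
  have hNall : HasAllMoments N := hasAllMoments_mono' hNle hν
  have hQμfin : IsFiniteMeasure (μ - P) := isFiniteMeasure_of_le μ Measure.sub_le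
  have hQνfin : IsFiniteMeasure (ν - N) := isFiniteMeasure_of_le ν Measure.sub_le
  have hQμall : HasAllMoments (μ - P) := hasAllMoments_mono' Measure.sub_le hμ
  have hQνall : HasAllMoments (ν - N) := hasAllMoments_mono' Measure.sub_le hν
  have hμdec : μ - P + P = μ := Measure.sub_add_cancel_of_le hPle
  have hνdec : ν - N + N = ν := Measure.sub_add_cancel_of_le hNle
  have hmomμ : ∀ γ, mMom μ γ = mMom (μ - P) γ + mMom P γ := by
    intro γ
    have h' := integral_add_measure (hQμall γ) (hPall γ)
    rw [hμdec] at h'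
    exact h'
  have hmomν : ∀ γ, mMom ν γ = mMom (ν - N) γ + mMom N γ := by
    intro γ
    have h' := integral_add_measure (hQνall γ) (hNall γ)
    rw [hνdec] at h'
    exact h'
  have hmomkey : ∀ γ, mMom μ γ + mMom N γ = mMom ν γ + mMom P γ := by
    intro γ
    have e1 : mMom (μ + N) γ = mMom μ γ + mMom N γ := integral_add_measure (hμ γ) (hNall γ)
    have e2 : mMom (ν + P) γ = mMom ν γ + mMom P γ := integral_add_measure (hν γ) (hPall γ)
    rw [← e1, ← e2, hkey]
  -- the feasible point
  set φ : PV d n := fun α => mMom P α.1 with hφdef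
  set ψ : PV d n := fun α => mMom N α.1 with hψdef
  have hφmat : pvMat d n φ = momMat d n (mMom P) := rfl
  have hψmat : pvMat d n ψ = momMat d n (mMom N) := rfl
  have hFeas : Feas d n μ ν φ ψ := by
    refine ⟨fun α => by have := hmomkey α.1; simp only [hφdef, hψdef]; linarith, ?_, ?_, ?_, ?_⟩
    · rw [hφmat]; exact momMat_posSemidef n P hPall
    · have hsub : momMat d n (mMom μ) - pvMat d n φ = momMat d n (mMom (μ - P)) := by
        rw [hφmat]
        ext a b
        simp only [Matrix.sub_apply, momMat]
        rw [hmomμ]; ring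
      rw [hsub]
      exact momMat_posSemidef n (μ - P) hQμall
    · rw [hψmat]; exact momMat_posSemidef n N hNall
    · have hsub : momMat d n (mMom ν) - pvMat d n ψ = momMat d n (mMom (ν - N)) := by
        rw [hψmat]
        ext a b
        simp only [Matrix.sub_apply, momMat]
        rw [hmomν]; ring
      rw [hsub]
      exact momMat_posSemidef n (ν - N) hQνall
  have hval : φ (zeroIdx d n) + ψ (zeroIdx d n)
      = (P Set.univ).toReal + (N Set.univ).toReal := by
    simp only [hφdef, hψdef, zeroIdx]
    rw [mMom_zero' P, mMom_zero' N]
  have hmem : (P Set.univ).toReal + (N Set.univ).toReal ∈ primalSet d n μ ν :=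
    ⟨φ, ψ, hFeas, hval.symm⟩
  -- boundedness below
  have hdiag : ∀ (χ : PV d n), (pvMat d n χ).PosSemidef → 0 ≤ χ (zeroIdx d n) := by
    intro χ hχ
    set e : {α : Fin d → ℕ // ∑ i, α i ≤ n} := ⟨0, by simp⟩ with hedef
    have heq : pvMat d n χ e e = χ (zeroIdx d n) := by
      apply congrArg χ
      apply Subtype.ext
      simp [hedef, zeroIdx]
    have h0 := hχ.dotProduct_mulVec_nonneg (Pi.single e 1)
    rw [show dotProduct (star (Pi.single e 1))
        ((pvMat d n χ).mulVec (Pi.single e 1)) = pvMat d n χ e e by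
      simp [dotProduct, Matrix.mulVec, Pi.single_apply, Finset.mul_sum,
        mul_ite, ite_mul]] at h0
    rwa [heq] at h0
  have hbdd : BddBelow (primalSet d n μ ν) := by
    refine ⟨0, fun r hr => ?_⟩
    obtain ⟨φ', ψ', hf, hr⟩ := hr
    have h1 := hdiag φ' hf.2.1
    have h2 := hdiag ψ' hf.2.2.2.1
    rw [hr]
    linarith
  -- tvReal value
  have htv : tvReal μ ν = (P Set.univ).toReal + (N Set.univ).toReal := by
    unfold tvReal
    rw [← hPdef, ← hNdef, ENNReal.toReal_add (measure_ne_top _ _) (measure_ne_top _ _)]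
  have hrle : rho d n μ ν ≤ tvReal μ ν := by
    rw [htv]
    exact csInf_le hbdd hmem
  have hPr : (P Set.univ).toReal ≤ 1 := by
    simpa using ENNReal.toReal_mono ENNReal.one_ne_top hP1
  have hNr : (N Set.univ).toReal ≤ 1 := by
    simpa using ENNReal.toReal_mono ENNReal.one_ne_top hN1
  have htv2 : tvReal μ ν = 2 := by
    rw [htv]
    rw [h, htv] at hrle
    linarith
  refine ⟨htv2, ?_⟩
  -- mutual singularity of μ and ν
  have hPuniv : P Set.univ = 1 := by
    rw [htv] at htv2
    have hPr1 : (P Set.univ).toReal = 1 := by linarith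
    refine (ENNReal.toReal_eq_toReal_iff' (measure_ne_top _ _) ENNReal.one_ne_top).mp ?_
    simpa using hPr1
  have hPA : P Sᶜ = 1 := by
    have := measure_add_measure_compl (μ := P) hSm
    rw [hPS, zero_add, hPuniv] at this
    exact this
  have h2 := hkeyE Sᶜ
  have hNA : N Sᶜ = 0 := hNSc
  rw [hNA, add_zero, hPA] at h2
  -- h2 : μ Sᶜ = ν Sᶜ + 1
  have hμA1 : μ Sᶜ ≤ 1 := prob_le_one
  have hνA : ν Sᶜ = 0 := by
    have hle1 : ν Sᶜ + 1 ≤ 0 + 1 := by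
      rw [zero_add, ← h2]
      exact hμA1
    have := (ENNReal.add_le_add_iff_right ENNReal.one_ne_top).mp hle1
    exact le_antisymm this (zero_le)
  have hμAc : μ S = 0 := by
    have := measure_add_measure_compl (μ := μ) hSm
    rw [h2, hνA, zero_add, measure_univ] at this
    -- this : μ S + 1 = 1
    have h3 : μ S + 1 ≤ 0 + 1 := by rw [zero_add, this]
    have := (ENNReal.add_le_add_iff_right ENNReal.one_ne_top).mp h3
    exact le_antisymm this (zero_le)
  exact ⟨S, hSm, hμAc, hνA⟩

end
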